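/- There exists a universal constant K such that for all u ∈ H¹(ℝ) and all t > 0, ∫_ℝ |u|⁶ dx ≤ K · ρ(u,t)² · ( ∫_ℝ |u'|² dx + t^{-2} ∫_ℝ |u|² dx ), where ρ(u,t) = sup_{y} ∫_{|x−y|<t} |u|² dx. -/

import Mathlib

open MeasureTheory Set



lemma re_add_im_mul_le (z w : ℂ) : z.re * w.re + z.im * w.im ≤ ‖z‖ * ‖w‖ := by
  have hz : ‖z‖ ^ 2 = z.re ^ 2 + z.im ^ 2 := by
    rw [Complex.sq_norm, Complex.normSq_apply]; ring
  have hw : ‖w‖ ^ 2 = w.re ^ 2 + w.im ^ 2 := by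
    rw [Complex.sq_norm, Complex.normSq_apply]; ring
  nlinarith [sq_nonneg (z.re * w.im - z.im * w.re), norm_nonneg z, norm_nonneg w,
    mul_nonneg (norm_nonneg z) (norm_nonneg w),
    sq_nonneg (z.re * w.re + z.im * w.im - ‖z‖ * ‖w‖)]

lemma abs_re_add_im_mul_le (z w : ℂ) : |z.re * w.re + z.im * w.im| ≤ ‖z‖ * ‖w‖ := by
  rw [abs_le]
  refine ⟨?_, re_add_im_mul_le z w⟩
  have := re_add_im_mul_le z (-w)
  simp only [Complex.neg_re, Complex.neg_im, norm_neg] at this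
  linarith

lemma hasDerivAt_norm_sq (u : ℝ → ℂ) (x : ℝ) {u' : ℂ} (hu : HasDerivAt u u' x) :
    HasDerivAt (fun y => ‖u y‖ ^ 2)
      (2 * ((u x).re * u'.re + (u x).im * u'.im)) x := by
  have hre : HasDerivAt (fun y => (u y).re) u'.re x :=
    (Complex.reCLM.hasFDerivAt.comp_hasDerivAt x hu)
  have him : HasDerivAt (fun y => (u y).im) u'.im x :=
    (Complex.imCLM.hasFDerivAt.comp_hasDerivAt x hu)
  have h : HasDerivAt (fun y => (u y).re * (u y).re + (u y).im * (u y).im)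
      (u'.re * (u x).re + (u x).re * u'.re + (u'.im * (u x).im + (u x).im * u'.im)) x :=
    (hre.mul hre).add (him.mul him)
  have heq : (fun y => ‖u y‖ ^ 2) = fun y => (u y).re * (u y).re + (u y).im * (u y).im := by
    funext y
    rw [Complex.sq_norm, Complex.normSq_apply]
  rw [heq]
  convert h using 1
  ring

/-- Cauchy–Schwarz for set integrals of norms. -/
lemma cs_aux (u v : ℝ → ℂ) (hu : MemLp u 2 (volume : Measure ℝ))
    (hv : MemLp v 2 (volume : Measure ℝ)) (s : Set ℝ) :
    ∫ y in s, ‖u y‖ * ‖v y‖ ≤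
      Real.sqrt (∫ y in s, ‖u y‖ ^ 2) * Real.sqrt (∫ y in s, ‖v y‖ ^ 2) := by
  have hpq : (2 : ℝ).HolderConjugate 2 := Real.HolderConjugate.two_two
  have hu2 : MemLp (fun y => ‖u y‖) (ENNReal.ofReal 2) (volume.restrict s) := by
    rw [ENNReal.ofReal_ofNat]
    exact (hu.restrict s).norm
  have hv2 : MemLp (fun y => ‖v y‖) (ENNReal.ofReal 2) (volume.restrict s) := by
    rw [ENNReal.ofReal_ofNat]
    exact (hv.restrict s).norm
  have H := integral_mul_le_Lp_mul_Lq_of_nonneg hpq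
    (ae_of_all _ fun y => norm_nonneg (u y)) (ae_of_all _ fun y => norm_nonneg (v y)) hu2 hv2
  have e1 : ∀ w : ℝ → ℂ, (∫ y in s, ‖w y‖ ^ (2:ℝ)) = ∫ y in s, ‖w y‖ ^ 2 := by
    intro w
    refine integral_congr_ae (ae_of_all _ fun y => ?_)
    exact Real.rpow_two _
  rw [e1, e1] at H
  refine H.trans (le_of_eq ?_)
  rw [Real.sqrt_eq_rpow, Real.sqrt_eq_rpow]


section
variable (u : ℝ → ℂ)

/-- key interval sup bound -/
lemma interval_sup_bound (hd : Differentiable ℝ u)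
    (hu2 : MemLp u 2 (volume : Measure ℝ))
    (hdu2 : MemLp (deriv u) 2 (volume : Measure ℝ))
    {a b : ℝ} (hab : a < b) {x : ℝ} (hx : x ∈ Icc a b) :
    ‖u x‖ ^ 2 ≤ (b - a)⁻¹ * (∫ y in Ioc a b, ‖u y‖ ^ 2) +
      2 * Real.sqrt (∫ y in Ioc a b, ‖u y‖ ^ 2) *
        Real.sqrt (∫ y in Ioc a b, ‖deriv u y‖ ^ 2) := by
  have hmu : Integrable (fun y => ‖u y‖ ^ 2) (volume : Measure ℝ) := hu2.norm.integrable_sq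
  have hme : Integrable (fun y => ‖deriv u y‖ ^ 2) (volume : Measure ℝ) :=
    hdu2.norm.integrable_sq
  set g : ℝ → ℝ := fun y => ‖u y‖ ^ 2 with hg_def
  set D : ℝ → ℝ :=
    fun y => 2 * ((u y).re * (deriv u y).re + (u y).im * (deriv u y).im) with hD_def
  have hg : ∀ y, HasDerivAt g (D y) y := fun y =>
    hasDerivAt_norm_sq u y (hd y).hasDerivAt
  have hDle : ∀ y, |D y| ≤ 2 * (‖u y‖ * ‖deriv u y‖) := by
    intro y
    rw [hD_def, abs_mul, abs_two]
    exact mul_le_mul_of_nonneg_left (abs_re_add_im_mul_le _ _) (by norm_num)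
  -- integrability of the product and of D
  have hprod : Integrable (fun y => ‖u y‖ * ‖deriv u y‖) (volume : Measure ℝ) := by
    refine Integrable.mono' ((hmu.add hme).const_mul (1/2))
      (hd.continuous.norm.aestronglyMeasurable.mul
        (stronglyMeasurable_deriv u).aestronglyMeasurable.norm)
      (ae_of_all _ fun y => ?_)
    rw [Real.norm_of_nonneg (mul_nonneg (norm_nonneg _) (norm_nonneg _))]
    simp only [Pi.add_apply, hg_def]
    nlinarith [sq_nonneg (‖u y‖ - ‖deriv u y‖)]
  have hDmeas : AEStronglyMeasurable D (volume : Measure ℝ) := by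
    have mu_re : Measurable fun y => (u y).re :=
      Complex.measurable_re.comp hd.continuous.measurable
    have mu_im : Measurable fun y => (u y).im :=
      Complex.measurable_im.comp hd.continuous.measurable
    have md_re : Measurable fun y => (deriv u y).re :=
      Complex.measurable_re.comp (measurable_deriv u)
    have md_im : Measurable fun y => (deriv u y).im :=
      Complex.measurable_im.comp (measurable_deriv u)
    exact (((mu_re.mul md_re).add (mu_im.mul md_im)).const_mul 2).aestronglyMeasurable
  have hDint : Integrable D (volume : Measure ℝ) := by
    refine Integrable.mono' (hprod.const_mul 2) hDmeas (ae_of_all _ fun y => ?_)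
    exact (hDle y)
  set J : ℝ := ∫ s in Ioc a b, |D s| with hJ_def
  -- FTC: oscillation bound
  have habs : ∀ z ∈ Icc a b, ∀ w ∈ Icc a b, g z ≤ g w + J := by
    have key : ∀ z w : ℝ, w ≤ z → z ∈ Icc a b → w ∈ Icc a b → |g z - g w| ≤ J := by
      intro z w hwz hz hw
      have hsub : Set.uIcc w z ⊆ Icc a b := by
        rw [Set.uIcc_of_le hwz]
        exact Icc_subset_Icc hw.1 hz.2
      have hii : IntervalIntegrable D volume w z :=
        ((hDint.integrableOn).mono_set hsub).intervalIntegrable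
      have hftc : ∫ s in w..z, D s = g z - g w :=
        intervalIntegral.integral_eq_sub_of_hasDerivAt (fun s _ => hg s) hii
      rw [← hftc]
      calc |∫ s in w..z, D s| ≤ ∫ s in w..z, |D s| :=
            intervalIntegral.abs_integral_le_integral_abs hwz
        _ = ∫ s in Ioc w z, |D s| := intervalIntegral.integral_of_le hwz
        _ ≤ J := by
            refine setIntegral_mono_set (hDint.abs.integrableOn)
              (ae_of_all _ fun s => abs_nonneg _) (HasSubset.Subset.eventuallyLE ?_)
            exact Ioc_subset_Ioc hw.1 hz.2
    intro z hz w hw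
    rcases le_total w z with h | h
    · have := key z w h hz hw
      have := abs_le.mp this
      linarith [this.2]
    · have := key w z h hw hz
      have := abs_le.mp this
      linarith [this.1]
  -- minimum point
  obtain ⟨y0, hy0mem, hy0⟩ := isCompact_Icc.exists_isMinOn (nonempty_Icc.mpr hab.le)
    ((hd.continuous.norm.pow 2).continuousOn : ContinuousOn g (Icc a b))
  have hba : (0:ℝ) < b - a := sub_pos.mpr hab
  have hmin : g y0 ≤ (b - a)⁻¹ * ∫ y in Ioc a b, g y := by
    have h1 : g y0 * (b - a) ≤ ∫ y in Ioc a b, g y := by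
      have h2 : ∫ _ in Ioc a b, g y0 ≤ ∫ y in Ioc a b, g y := by
        refine setIntegral_mono_on (integrableOn_const measure_Ioc_lt_top.ne)
          hmu.integrableOn measurableSet_Ioc fun z hz => hy0 (Ioc_subset_Icc_self hz)
      rwa [setIntegral_const, Real.volume_real_Ioc_of_le hab.le,
        smul_eq_mul, mul_comm] at h2
    rw [inv_mul_eq_div, le_div_iff₀ hba]
    exact h1
  -- Cauchy–Schwarz bound on J
  have hJle : J ≤ 2 * Real.sqrt (∫ y in Ioc a b, ‖u y‖ ^ 2) *
      Real.sqrt (∫ y in Ioc a b, ‖deriv u y‖ ^ 2) := by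
    have h1 : J ≤ ∫ s in Ioc a b, 2 * (‖u s‖ * ‖deriv u s‖) := by
      refine setIntegral_mono_on (hDint.abs.integrableOn)
        ((hprod.const_mul 2).integrableOn) measurableSet_Ioc fun s _ => hDle s
    have h2 : ∫ s in Ioc a b, 2 * (‖u s‖ * ‖deriv u s‖) =
        2 * ∫ s in Ioc a b, ‖u s‖ * ‖deriv u s‖ := integral_const_mul 2 _
    have h3 := cs_aux u (deriv u) hu2 hdu2 (Ioc a b)
    calc J ≤ 2 * ∫ s in Ioc a b, ‖u s‖ * ‖deriv u s‖ := by rw [← h2]; exact h1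
      _ ≤ 2 * (Real.sqrt (∫ y in Ioc a b, ‖u y‖ ^ 2) *
            Real.sqrt (∫ y in Ioc a b, ‖deriv u y‖ ^ 2)) := by
          exact mul_le_mul_of_nonneg_left h3 (by norm_num)
      _ = _ := by ring
  have := habs x hx y0 hy0mem
  have : g x ≤ (b - a)⁻¹ * (∫ y in Ioc a b, g y) + J := by linarith
  calc g x ≤ (b - a)⁻¹ * (∫ y in Ioc a b, g y) + J := this
    _ ≤ _ := by
        refine add_le_add le_rfl hJle
end

lemma cube_le_aux {g a : ℝ} (hg : 0 ≤ g) (hga : g ≤ a) : g ^ 3 ≤ a ^ 2 * g := by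
  have h1 : g * g ≤ a * a := mul_le_mul hga hga hg (hg.trans hga)
  have h2 : g * g * g ≤ a * a * g := mul_le_mul_of_nonneg_right h1 hg
  nlinarith [h2]

/-- The concentration function `ρ(u,t) = sup_y ∫_{|x-y|<t} |u|²`. -/
noncomputable def concentration (u : ℝ → ℂ) (t : ℝ) : ℝ :=
  ⨆ y : ℝ, ∫ x in Ioo (y - t) (y + t), ‖u x‖ ^ 2

/-- Localized Gagliardo–Nirenberg: there is a universal `K` such that for all
`u ∈ H¹(ℝ)` and `t > 0`,
`∫|u|⁶ ≤ K ρ(u,t)² (∫|u'|² + t⁻² ∫|u|²)`. -/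
theorem localized_gagliardo_nirenberg :
    ∃ K : ℝ, ∀ u : ℝ → ℂ,
      Differentiable ℝ u →
      MemLp u 2 (volume : Measure ℝ) →
      MemLp (deriv u) 2 (volume : Measure ℝ) →
      ∀ t : ℝ, 0 < t →
        ∫ x : ℝ, ‖u x‖ ^ 6
          ≤ K * concentration u t ^ 2 *
              ((∫ x : ℝ, ‖deriv u x‖ ^ 2) + t⁻¹ ^ 2 * ∫ x : ℝ, ‖u x‖ ^ 2) := by
  refine ⟨8, fun u hd hu2 hdu2 t ht => ?_⟩
  have hmu : Integrable (fun x => ‖u x‖ ^ 2) (volume : Measure ℝ) := hu2.norm.integrable_sq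
  have hme : Integrable (fun x => ‖deriv u x‖ ^ 2) (volume : Measure ℝ) :=
    hdu2.norm.integrable_sq
  have hM0 : 0 ≤ ∫ x : ℝ, ‖u x‖ ^ 2 := integral_nonneg fun x => sq_nonneg _
  have hE0 : 0 ≤ ∫ x : ℝ, ‖deriv u x‖ ^ 2 := integral_nonneg fun x => sq_nonneg _
  have hwin : ∀ y : ℝ, (∫ x in Ioo (y - t) (y + t), ‖u x‖ ^ 2) ≤ ∫ x : ℝ, ‖u x‖ ^ 2 :=
    fun y => setIntegral_le_integral hmu (ae_of_all _ fun z => sq_nonneg _)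
  have hbdd : BddAbove (Set.range fun y : ℝ => ∫ x in Ioo (y - t) (y + t), ‖u x‖ ^ 2) := by
    refine ⟨∫ x : ℝ, ‖u x‖ ^ 2, ?_⟩
    rintro r ⟨y, rfl⟩
    exact hwin y
  have hρ0 : 0 ≤ concentration u t :=
    le_trans (setIntegral_nonneg measurableSet_Ioo fun _ _ => sq_nonneg _)
      (le_ciSup hbdd (0 : ℝ))
  -- the partition of ℝ into intervals of length t
  set I : ℤ → Set ℝ := fun j => Ioc (j • t) ((j + 1) • t) with hI_def
  have hImeas : ∀ j, MeasurableSet (I j) := fun j => measurableSet_Ioc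
  have hIdisj : Pairwise (Function.onFun Disjoint I) := pairwise_disjoint_Ioc_zsmul t
  have hIunion : (⋃ j : ℤ, I j) = univ := iUnion_Ioc_zsmul ht
  have hlt : ∀ j : ℤ, (j • t : ℝ) < (j + 1) • t := by
    intro j
    rw [zsmul_eq_mul, zsmul_eq_mul]
    push_cast
    nlinarith
  have hlen : ∀ j : ℤ, ((j + 1) • t : ℝ) - j • t = t := by
    intro j
    rw [zsmul_eq_mul, zsmul_eq_mul]
    push_cast
    ring
  have hmj0 : ∀ j, 0 ≤ ∫ x in I j, ‖u x‖ ^ 2 :=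
    fun j => setIntegral_nonneg (hImeas j) fun _ _ => sq_nonneg _
  have hej0 : ∀ j, 0 ≤ ∫ x in I j, ‖deriv u x‖ ^ 2 :=
    fun j => setIntegral_nonneg (hImeas j) fun _ _ => sq_nonneg _
  have hmjρ : ∀ j, (∫ x in I j, ‖u x‖ ^ 2) ≤ concentration u t := by
    intro j
    have hsub : I j ⊆ Ioo ((j • t + t / 2) - t) ((j • t + t / 2) + t) := by
      intro z hz
      have h1 : (j • t : ℝ) < z := hz.1
      have h2 : z ≤ (j + 1) • t := hz.2
      have h3 := hlen j
      constructor <;> [skip; skip] <;> linarith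
    calc (∫ x in I j, ‖u x‖ ^ 2)
        ≤ ∫ x in Ioo ((j • t + t / 2) - t) ((j • t + t / 2) + t), ‖u x‖ ^ 2 :=
          setIntegral_mono_set hmu.integrableOn (ae_of_all _ fun z => sq_nonneg _)
            hsub.eventuallyLE
      _ ≤ concentration u t := le_ciSup hbdd (j • t + t / 2)
  -- uniform pointwise bound, for integrability of `‖u‖⁶`
  have hA : ∀ x : ℝ, ‖u x‖ ^ 2 ≤
      t⁻¹ * (∫ x : ℝ, ‖u x‖ ^ 2) +
        2 * Real.sqrt (∫ x : ℝ, ‖u x‖ ^ 2) * Real.sqrt (∫ x : ℝ, ‖deriv u x‖ ^ 2) := by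
    intro x
    have h := interval_sup_bound u hd hu2 hdu2 (show x - t < x by linarith)
      (show x ∈ Icc (x - t) x from ⟨by linarith, le_refl x⟩)
    have hxx : x - (x - t) = t := by ring
    rw [hxx] at h
    refine h.trans (add_le_add ?_ ?_)
    · exact mul_le_mul_of_nonneg_left
        (setIntegral_le_integral hmu (ae_of_all _ fun z => sq_nonneg _))
        (inv_nonneg.mpr ht.le)
    · have s1 := Real.sqrt_le_sqrt
        (setIntegral_le_integral hmu (ae_of_all _ fun z => sq_nonneg _) :
          (∫ y in Ioc (x - t) x, ‖u y‖ ^ 2) ≤ ∫ x : ℝ, ‖u x‖ ^ 2)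
      have s2 := Real.sqrt_le_sqrt
        (setIntegral_le_integral hme (ae_of_all _ fun z => sq_nonneg _) :
          (∫ y in Ioc (x - t) x, ‖deriv u y‖ ^ 2) ≤ ∫ x : ℝ, ‖deriv u x‖ ^ 2)
      have := mul_le_mul s1 s2 (Real.sqrt_nonneg _) (Real.sqrt_nonneg _)
      nlinarith [Real.sqrt_nonneg (∫ y in Ioc (x - t) x, ‖u y‖ ^ 2)]
  set A : ℝ := t⁻¹ * (∫ x : ℝ, ‖u x‖ ^ 2) +
      2 * Real.sqrt (∫ x : ℝ, ‖u x‖ ^ 2) * Real.sqrt (∫ x : ℝ, ‖deriv u x‖ ^ 2) with hA_def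
  have hA0 : 0 ≤ A := le_trans (sq_nonneg ‖u 0‖) (hA 0)
  have h6int : Integrable (fun x => ‖u x‖ ^ 6) (volume : Measure ℝ) := by
    refine Integrable.mono' (hmu.const_mul (A ^ 2))
      ((hd.continuous.norm.pow 6).aestronglyMeasurable) (ae_of_all _ fun x => ?_)
    rw [Real.norm_of_nonneg (by positivity)]
    have h1 := hA x
    have h2 : (0 : ℝ) ≤ ‖u x‖ ^ 2 := sq_nonneg _
    calc ‖u x‖ ^ 6 = (‖u x‖ ^ 2) ^ 3 := by ring
      _ ≤ A ^ 2 * ‖u x‖ ^ 2 := cube_le_aux h2 h1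
  -- has-sum decompositions
  have hsum6 : HasSum (fun j => ∫ x in I j, ‖u x‖ ^ 6) (∫ x : ℝ, ‖u x‖ ^ 6) := by
    have h := hasSum_integral_iUnion hImeas hIdisj
      (by rw [hIunion]; exact h6int.integrableOn : IntegrableOn (fun x => ‖u x‖ ^ 6) (⋃ j, I j))
    rwa [hIunion, setIntegral_univ] at h
  have hsumM : HasSum (fun j => ∫ x in I j, ‖u x‖ ^ 2) (∫ x : ℝ, ‖u x‖ ^ 2) := by
    have h := hasSum_integral_iUnion hImeas hIdisj
      (by rw [hIunion]; exact hmu.integrableOn : IntegrableOn (fun x => ‖u x‖ ^ 2) (⋃ j, I j))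
    rwa [hIunion, setIntegral_univ] at h
  have hsumE : HasSum (fun j => ∫ x in I j, ‖deriv u x‖ ^ 2) (∫ x : ℝ, ‖deriv u x‖ ^ 2) := by
    have h := hasSum_integral_iUnion hImeas hIdisj
      (by rw [hIunion]; exact hme.integrableOn :
        IntegrableOn (fun x => ‖deriv u x‖ ^ 2) (⋃ j, I j))
    rwa [hIunion, setIntegral_univ] at h
  -- the per-interval estimate
  have hkey : ∀ j : ℤ, (∫ x in I j, ‖u x‖ ^ 6) ≤
      concentration u t ^ 2 *
        (8 * (∫ x in I j, ‖deriv u x‖ ^ 2) + 2 * t⁻¹ ^ 2 * ∫ x in I j, ‖u x‖ ^ 2) := by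
    intro j
    have hab : (j • t : ℝ) < (j + 1) • t := hlt j
    have hgle : ∀ x ∈ I j, ‖u x‖ ^ 2 ≤
        t⁻¹ * (∫ x in I j, ‖u x‖ ^ 2) +
          2 * Real.sqrt (∫ x in I j, ‖u x‖ ^ 2) * Real.sqrt (∫ x in I j, ‖deriv u x‖ ^ 2) := by
      intro x hx
      have h := interval_sup_bound u hd hu2 hdu2 hab (Ioc_subset_Icc_self hx)
      rwa [hlen j] at h
    set aj : ℝ := t⁻¹ * (∫ x in I j, ‖u x‖ ^ 2) +
        2 * Real.sqrt (∫ x in I j, ‖u x‖ ^ 2) * Real.sqrt (∫ x in I j, ‖deriv u x‖ ^ 2)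
      with haj_def
    have haj0 : 0 ≤ aj :=
      add_nonneg (mul_nonneg (inv_nonneg.mpr ht.le) (hmj0 j)) (by positivity)
    have h1 : (∫ x in I j, ‖u x‖ ^ 6) ≤ aj ^ 2 * ∫ x in I j, ‖u x‖ ^ 2 := by
      have hstep : (∫ x in I j, ‖u x‖ ^ 6) ≤ ∫ x in I j, aj ^ 2 * ‖u x‖ ^ 2 := by
        refine setIntegral_mono_on h6int.integrableOn ((hmu.const_mul _).integrableOn)
          (hImeas j) fun x hx => ?_
        have h2 := hgle x hx
        have h3 : (0 : ℝ) ≤ ‖u x‖ ^ 2 := sq_nonneg _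
        calc ‖u x‖ ^ 6 = (‖u x‖ ^ 2) ^ 3 := by ring
          _ ≤ aj ^ 2 * ‖u x‖ ^ 2 := cube_le_aux h3 h2
      rwa [integral_const_mul] at hstep
    have hmsq : (∫ x in I j, ‖u x‖ ^ 2) ^ 2 ≤ concentration u t ^ 2 :=
      pow_le_pow_left₀ (hmj0 j) (hmjρ j) 2
    have hsqm : Real.sqrt (∫ x in I j, ‖u x‖ ^ 2) ^ 2 = ∫ x in I j, ‖u x‖ ^ 2 :=
      Real.sq_sqrt (hmj0 j)
    have hsqe : Real.sqrt (∫ x in I j, ‖deriv u x‖ ^ 2) ^ 2 = ∫ x in I j, ‖deriv u x‖ ^ 2 :=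
      Real.sq_sqrt (hej0 j)
    have h2 : aj ^ 2 ≤ 2 * (t⁻¹ ^ 2 * (∫ x in I j, ‖u x‖ ^ 2) ^ 2) +
        8 * ((∫ x in I j, ‖u x‖ ^ 2) * ∫ x in I j, ‖deriv u x‖ ^ 2) := by
      rw [haj_def]
      nlinarith [sq_nonneg (t⁻¹ * (∫ x in I j, ‖u x‖ ^ 2) -
          2 * Real.sqrt (∫ x in I j, ‖u x‖ ^ 2) * Real.sqrt (∫ x in I j, ‖deriv u x‖ ^ 2)),
        hsqm, hsqe, Real.sqrt_nonneg (∫ x in I j, ‖u x‖ ^ 2),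
        Real.sqrt_nonneg (∫ x in I j, ‖deriv u x‖ ^ 2), inv_nonneg.mpr ht.le, hmj0 j, hej0 j]
    have hstep2 : aj ^ 2 * (∫ x in I j, ‖u x‖ ^ 2) ≤
        2 * t⁻¹ ^ 2 * ((∫ x in I j, ‖u x‖ ^ 2) ^ 2 * (∫ x in I j, ‖u x‖ ^ 2)) +
          8 * ((∫ x in I j, ‖u x‖ ^ 2) ^ 2 * (∫ x in I j, ‖deriv u x‖ ^ 2)) := by
      nlinarith [mul_le_mul_of_nonneg_right h2 (hmj0 j), sq_nonneg t⁻¹, hmj0 j, hej0 j]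
    have hB : (∫ x in I j, ‖u x‖ ^ 2) ^ 2 * (∫ x in I j, ‖u x‖ ^ 2) ≤
        concentration u t ^ 2 * ∫ x in I j, ‖u x‖ ^ 2 :=
      mul_le_mul_of_nonneg_right hmsq (hmj0 j)
    have hC : (∫ x in I j, ‖u x‖ ^ 2) ^ 2 * (∫ x in I j, ‖deriv u x‖ ^ 2) ≤
        concentration u t ^ 2 * ∫ x in I j, ‖deriv u x‖ ^ 2 :=
      mul_le_mul_of_nonneg_right hmsq (hej0 j)
    have hB' : 2 * t⁻¹ ^ 2 * ((∫ x in I j, ‖u x‖ ^ 2) ^ 2 * (∫ x in I j, ‖u x‖ ^ 2)) ≤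
        2 * t⁻¹ ^ 2 * (concentration u t ^ 2 * ∫ x in I j, ‖u x‖ ^ 2) :=
      mul_le_mul_of_nonneg_left hB (by positivity)
    calc (∫ x in I j, ‖u x‖ ^ 6) ≤ aj ^ 2 * ∫ x in I j, ‖u x‖ ^ 2 := h1
      _ ≤ 2 * t⁻¹ ^ 2 * ((∫ x in I j, ‖u x‖ ^ 2) ^ 2 * (∫ x in I j, ‖u x‖ ^ 2)) +
          8 * ((∫ x in I j, ‖u x‖ ^ 2) ^ 2 * (∫ x in I j, ‖deriv u x‖ ^ 2)) := hstep2
      _ ≤ 2 * t⁻¹ ^ 2 * (concentration u t ^ 2 * ∫ x in I j, ‖u x‖ ^ 2) +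
          8 * (concentration u t ^ 2 * ∫ x in I j, ‖deriv u x‖ ^ 2) := by
            have hC' := mul_le_mul_of_nonneg_left hC (by norm_num : (0:ℝ) ≤ 8)
            linarith
      _ = concentration u t ^ 2 *
          (8 * (∫ x in I j, ‖deriv u x‖ ^ 2) + 2 * t⁻¹ ^ 2 * ∫ x in I j, ‖u x‖ ^ 2) := by
            ring
  -- summation
  have hsumR : HasSum
      (fun j => concentration u t ^ 2 *
        (8 * (∫ x in I j, ‖deriv u x‖ ^ 2) + 2 * t⁻¹ ^ 2 * ∫ x in I j, ‖u x‖ ^ 2))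
      (concentration u t ^ 2 *
        (8 * (∫ x : ℝ, ‖deriv u x‖ ^ 2) + 2 * t⁻¹ ^ 2 * ∫ x : ℝ, ‖u x‖ ^ 2)) :=
    ((hsumE.mul_left 8).add (hsumM.mul_left (2 * t⁻¹ ^ 2))).mul_left _
  have hle : (∫ x : ℝ, ‖u x‖ ^ 6) ≤ concentration u t ^ 2 *
      (8 * (∫ x : ℝ, ‖deriv u x‖ ^ 2) + 2 * t⁻¹ ^ 2 * ∫ x : ℝ, ‖u x‖ ^ 2) := by
    rw [← hsum6.tsum_eq, ← hsumR.tsum_eq]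
    exact Summable.tsum_le_tsum hkey hsum6.summable hsumR.summable
  refine hle.trans ?_
  nlinarith [mul_nonneg (sq_nonneg (concentration u t)) (mul_nonneg (sq_nonneg t⁻¹) hM0)]
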